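/- The dimension function H_m is constant on each set F(p), and for every x ∈ Q_m and every ε > 0 the function H_m attains all its possible values already on Q_m ∩ (x − ε, x + ε); that is, H_m(Q_m ∩ (x − ε, x + ε)) = H_m(Q_m) as sets of values. -/

import Mathlib

open Real Filter

/-- The `k+1`-st digit of `x` in the `m`-ary expansion, obtained by iterating
`T_m y = m·y - ⌊m·y⌋`. -/
noncomputable def mDigit (m k : ℕ) (x : ℝ) : ℤ :=
  ⌊(m : ℝ) * (fun y => Int.fract ((m : ℝ) * y))^[k] x⌋

/-- The set `F(p)` of `p`-quasinormal numbers in `[0,1)` for the `m`-ary expansion. -/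
def mFreqSet (m : ℕ) (p : ℕ → ℝ) : Set ℝ :=
  {x ∈ Set.Ico (0 : ℝ) 1 | ∀ i < m,
    Tendsto (fun n => (((Finset.range n).filter
        (fun k => mDigit m k x = (i : ℤ))).card : ℝ) / n) atTop (nhds (p i))}

lemma fract_iter (m : ℕ) : ∀ (n : ℕ) (w : ℝ),
    (fun y => Int.fract ((m : ℝ) * y))^[n] (Int.fract w) = Int.fract ((m : ℝ) ^ n * w) := by
  intro n
  induction n with
  | zero => intro w; simp
  | succ n ih =>
    intro w
    rw [Function.iterate_succ_apply]
    have h1 : Int.fract ((m : ℝ) * Int.fract w) = Int.fract ((m : ℝ) * w) := by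
      have h2 : (m : ℝ) * Int.fract w = (m : ℝ) * w - ((m * ⌊w⌋ : ℤ) : ℝ) := by
        rw [Int.fract]; push_cast; ring
      rw [h2, Int.fract_sub_intCast]
    show (fun y => Int.fract ((m:ℝ)*y))^[n] (Int.fract ((m:ℝ) * Int.fract w)) = _
    rw [h1, ih ((m:ℝ) * w), pow_succ]
    ring_nf

lemma mDigit_shift (m n : ℕ) (z y : ℝ) (hz : z ∈ Set.Ico (0:ℝ) 1)
    (hzy : Int.fract ((m:ℝ)^n * z) = y) (k : ℕ) :
    mDigit m (k + n) z = mDigit m k y := by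
  unfold mDigit
  rw [Function.iterate_add_apply]
  congr 2
  rw [← Int.fract_eq_self.2 hz, fract_iter, hzy]

lemma count_shift (f g : ℕ → Prop) [DecidablePred f] [DecidablePred g] (n : ℕ)
    (hfg : ∀ k, f (k + n) ↔ g k) :
    ∀ M, ((Finset.range (n + M)).filter f).card
      = ((Finset.range n).filter f).card + ((Finset.range M).filter g).card := by
  intro M
  induction M with
  | zero => simp
  | succ M ih =>
    rw [Nat.add_succ, Finset.range_add_one, Finset.range_add_one,
      Finset.filter_insert, Finset.filter_insert]
    have hfM : f (n + M) ↔ g M := by rw [Nat.add_comm]; exact hfg M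
    by_cases h : g M
    · rw [if_pos (hfM.2 h), if_pos h, Finset.card_insert_of_notMem (by simp),
        Finset.card_insert_of_notMem (by simp), ih]
      omega
    · rw [if_neg (fun hf => h (hfM.1 hf)), if_neg h, ih]

lemma tendsto_count_shift (A : ℕ → ℕ) (c n : ℕ) (p : ℝ)
    (hA : Tendsto (fun M => (A M : ℝ) / M) atTop (nhds p)) :
    Tendsto (fun N => ((c + A (N - n) : ℕ) : ℝ) / N) atTop (nhds p) := by
  have h1 : Tendsto (fun N => (A (N - n) : ℝ) / ((N - n : ℕ) : ℝ)) atTop (nhds p) :=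
    hA.comp (tendsto_sub_atTop_nat n)
  have h2 : Tendsto (fun N : ℕ => ((N - n : ℕ) : ℝ) / N) atTop (nhds 1) := by
    have hb : Tendsto (fun N : ℕ => 1 - (n : ℝ) / N) atTop (nhds 1) := by
      have := (tendsto_const_div_atTop_nhds_zero_nat (n : ℝ))
      simpa using (tendsto_const_nhds (x := (1:ℝ)) (f := atTop)).sub this
    apply hb.congr'
    filter_upwards [eventually_ge_atTop (n + 1)] with N hN
    have hN0 : (N : ℝ) ≠ 0 := by
      have : (0:ℕ) < N := by omega
      positivity
    rw [Nat.cast_sub (by omega)]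
    field_simp
  have h3 : Tendsto (fun N : ℕ => (c : ℝ) / N) atTop (nhds 0) :=
    tendsto_const_div_atTop_nhds_zero_nat (c : ℝ)
  have combo := h3.add (h1.mul h2)
  rw [zero_add, mul_one] at combo
  apply combo.congr'
  filter_upwards [eventually_ge_atTop (n + 1)] with N hN
  have hN0 : (N : ℝ) ≠ 0 := by
    have : (0:ℕ) < N := by omega
    positivity
  have hNn : ((N - n : ℕ) : ℝ) ≠ 0 := by
    have : (0:ℕ) < N - n := by omega
    positivity
  push_cast
  field_simp

lemma mem_mFreqSet_shift (m n : ℕ) (p : ℕ → ℝ) (y z : ℝ)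
    (hy : y ∈ mFreqSet m p) (hz : z ∈ Set.Ico (0:ℝ) 1)
    (hshift : ∀ k, mDigit m (k + n) z = mDigit m k y) : z ∈ mFreqSet m p := by
  refine ⟨hz, fun i hi => ?_⟩
  have hA := hy.2 i hi
  have hcount := count_shift (fun k => mDigit m k z = (i : ℤ))
    (fun k => mDigit m k y = (i : ℤ)) n (fun k => by simp only [hshift k])
  have key2 := tendsto_count_shift
    (fun M => ((Finset.range M).filter (fun k => mDigit m k y = (i : ℤ))).card)
    (((Finset.range n).filter (fun k => mDigit m k z = (i : ℤ))).card) n (p i) hA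
  apply key2.congr'
  filter_upwards [eventually_ge_atTop n] with N hN
  have hNn : n + (N - n) = N := by omega
  have key := hcount (N - n)
  rw [hNn] at key
  rw [key]

/-- The dimension function `H_m` is constant on each set `F(p)`, and on any
neighbourhood of any quasinormal number it already attains all of its possible values. -/
theorem Hm_constant_on_freq_sets_and_locally_full_range
    (m : ℕ) (hm : 2 ≤ m) (γ : ℕ → ℕ → ℝ)
    (hγpos : ∀ i < m, ∀ j, 0 < γ i j)
    (hγsum : ∀ i < m, Summable (fun j => γ i j))
    (hγsup : ∃ C : ℝ, C < 1 ∧ ∀ i < m, ∀ j, γ i j ≤ C)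
    (θ : ℝ)
    (hθ : θ = ⨆ i : Fin m, sInf {t : ℝ | 0 < t ∧ Summable (fun j => γ i j ^ t)})
    (hdiv : ∃ i₀ < m, ¬ Summable (fun j => γ i₀ j ^ θ))
    (Q : Set ℝ)
    (hQ : Q = {x | ∃ p : ℕ → ℝ, (∀ i < m, 0 < p i) ∧
      (∑ i ∈ Finset.range m, p i = 1) ∧ x ∈ mFreqSet m p})
    (H : ℝ → ℝ)
    (hH : ∀ p : ℕ → ℝ, (∀ i < m, 0 < p i) → (∑ i ∈ Finset.range m, p i = 1) →
      ∀ x ∈ mFreqSet m p, θ < H x ∧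
        ∑ i ∈ Finset.range m, p i * Real.log (∑' j, γ i j ^ (H x)) = 0) :
    (∀ p : ℕ → ℝ, (∀ i < m, 0 < p i) → (∑ i ∈ Finset.range m, p i = 1) →
      ∀ x ∈ mFreqSet m p, ∀ y ∈ mFreqSet m p, H x = H y) ∧
    (∀ x ∈ Q, ∀ ε : ℝ, 0 < ε →
      H '' (Q ∩ Set.Ioo (x - ε) (x + ε)) = H '' Q) := by
  obtain ⟨C, hC1, hCle⟩ := hγsup
  have hγlt1 : ∀ i < m, ∀ j, γ i j < 1 := fun i hi j => lt_of_le_of_lt (hCle i hi j) hC1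
  -- summability beyond θ
  have hsum : ∀ t, θ < t → ∀ i, i < m → Summable (fun j => γ i j ^ t) := by
    intro t ht i hi
    have h1S : (1:ℝ) ∈ {s : ℝ | 0 < s ∧ Summable (fun j => γ i j ^ s)} :=
      ⟨one_pos, by simpa [Real.rpow_one] using hγsum i hi⟩
    have hSne : Set.Nonempty {s : ℝ | 0 < s ∧ Summable (fun j => γ i j ^ s)} := ⟨1, h1S⟩
    have hinf_le : sInf {s : ℝ | 0 < s ∧ Summable (fun j => γ i j ^ s)} ≤ θ := by
      rw [hθ]
      exact le_ciSup (f := fun i : Fin m =>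
          sInf {t : ℝ | 0 < t ∧ Summable fun j => γ (i : ℕ) j ^ t})
        (Set.Finite.bddAbove (Set.finite_range _)) ⟨i, hi⟩
    obtain ⟨s, hsS, hst⟩ := exists_lt_of_csInf_lt hSne (lt_of_le_of_lt hinf_le ht)
    exact Summable.of_nonneg_of_le
      (fun j => Real.rpow_nonneg (hγpos i hi j).le _)
      (fun j => Real.rpow_le_rpow_of_exponent_ge (hγpos i hi j) (hγlt1 i hi j).le hst.le)
      hsS.2
  -- positivity of the sums
  have hGpos : ∀ t, θ < t → ∀ i, i < m → 0 < ∑' j, γ i j ^ t := fun t ht i hi =>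
    Summable.tsum_pos (hsum t ht i hi) (fun j => Real.rpow_nonneg (hγpos i hi j).le _) 0
      (Real.rpow_pos_of_pos (hγpos i hi 0) t)
  -- strict decrease
  have hGlt : ∀ a b, θ < a → a < b → ∀ i, i < m →
      (∑' j, γ i j ^ b) < ∑' j, γ i j ^ a := by
    intro a b ha hab i hi
    exact Summable.tsum_lt_tsum_of_nonneg
      (fun j => Real.rpow_nonneg (hγpos i hi j).le _)
      (fun j => Real.rpow_le_rpow_of_exponent_ge (hγpos i hi j) (hγlt1 i hi j).le hab.le)
      (Real.rpow_lt_rpow_of_exponent_gt (hγpos i hi 0) (hγlt1 i hi 0) hab)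
      (hsum a ha i hi)
  -- uniqueness of the solution of the pressure equation
  have huniq : ∀ p : ℕ → ℝ, (∀ i < m, 0 < p i) → ∀ a b, θ < a → θ < b →
      (∑ i ∈ Finset.range m, p i * Real.log (∑' j, γ i j ^ a)) = 0 →
      (∑ i ∈ Finset.range m, p i * Real.log (∑' j, γ i j ^ b)) = 0 → a = b := by
    have hmono : ∀ p : ℕ → ℝ, (∀ i < m, 0 < p i) → ∀ a b, θ < a → a < b →
        (∑ i ∈ Finset.range m, p i * Real.log (∑' j, γ i j ^ b)) <
          ∑ i ∈ Finset.range m, p i * Real.log (∑' j, γ i j ^ a) := by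
      intro p hp a b ha hab
      refine Finset.sum_lt_sum_of_nonempty ⟨0, Finset.mem_range.2 (by omega)⟩ ?_
      intro i hi
      rw [Finset.mem_range] at hi
      refine mul_lt_mul_of_pos_left ?_ (hp i hi)
      exact Real.log_lt_log (hGpos b (ha.trans hab) i hi) (hGlt a b ha hab i hi)
    intro p hp a b ha hb hza hzb
    rcases lt_trichotomy a b with h | h | h
    · exact absurd (hza ▸ hzb ▸ hmono p hp a b ha h) (lt_irrefl 0)
    · exact h
    · exact absurd (hzb ▸ hza ▸ hmono p hp b a hb h) (lt_irrefl 0)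
  have hconst : ∀ p : ℕ → ℝ, (∀ i < m, 0 < p i) → (∑ i ∈ Finset.range m, p i = 1) →
      ∀ x ∈ mFreqSet m p, ∀ y ∈ mFreqSet m p, H x = H y := by
    intro p hp hp1 x hx y hy
    obtain ⟨hθx, hex⟩ := hH p hp hp1 x hx
    obtain ⟨hθy, hey⟩ := hH p hp hp1 y hy
    exact huniq p hp (H x) (H y) hθx hθy hex hey
  refine ⟨hconst, ?_⟩
  intro x hx ε hε
  refine Set.Subset.antisymm (Set.image_mono Set.inter_subset_left) ?_
  rintro v ⟨y, hyQ, rfl⟩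
  rw [hQ] at hx hyQ
  obtain ⟨q, hq, hq1, hxF⟩ := hx
  obtain ⟨p, hp, hp1, hyF⟩ := hyQ
  obtain ⟨hx0, hx1⟩ := hxF.1
  obtain ⟨hy0, hy1⟩ := hyF.1
  have hm1 : (1:ℝ) < m := by exact_mod_cast hm.trans_lt' one_lt_two
  obtain ⟨n, hn⟩ : ∃ n : ℕ, 1/ε < (m:ℝ)^n := pow_unbounded_of_one_lt _ hm1
  have hmn : (0:ℝ) < (m:ℝ)^n := by positivity
  have hεmn : 1 < ε * (m:ℝ)^n := by
    rw [div_lt_iff₀ hε] at hn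
    linarith [hn]
  set K : ℤ := ⌊(m:ℝ)^n * x⌋ with hK
  have hK0 : (0:ℝ) ≤ (K:ℝ) := by
    exact_mod_cast Int.floor_nonneg.2 (by positivity)
  have hKle : (K:ℝ) ≤ (m:ℝ)^n * x := Int.floor_le _
  have hKgt : (m:ℝ)^n * x < (K:ℝ) + 1 := Int.lt_floor_add_one _
  set z : ℝ := ((K:ℝ) + y) / (m:ℝ)^n with hzdef
  have hfz : (m:ℝ)^n * z = (K:ℝ) + y := by
    rw [hzdef]; field_simp
  have hKlt : (K:ℝ) + 1 ≤ (m:ℝ)^n := by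
    have h1 : K < ((m^n : ℕ) : ℤ) := Int.floor_lt.2 (by push_cast; nlinarith)
    have h2 : K + 1 ≤ ((m^n : ℕ) : ℤ) := h1
    exact_mod_cast h2
  have hz01 : z ∈ Set.Ico (0:ℝ) 1 := by
    constructor
    · apply div_nonneg (by linarith) hmn.le
    · rw [div_lt_one hmn]
      nlinarith
  have hfract : Int.fract ((m:ℝ)^n * z) = y := by
    rw [hfz, Int.fract_intCast_add, Int.fract_eq_self.2 ⟨hy0, hy1⟩]
  have hzF : z ∈ mFreqSet m p :=
    mem_mFreqSet_shift m n p y z hyF hz01 (mDigit_shift m n z y hz01 hfract)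
  have hzQ : z ∈ Q := by rw [hQ]; exact ⟨p, hp, hp1, hzF⟩
  have hzI : z ∈ Set.Ioo (x - ε) (x + ε) := by
    constructor
    · rw [hzdef, lt_div_iff₀ hmn]
      nlinarith
    · rw [hzdef, div_lt_iff₀ hmn]
      nlinarith
  exact ⟨z, ⟨hzQ, hzI⟩, hconst p hp hp1 z hzF y hyF⟩
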